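/- Let r ≥ 0 be an integer, ε > 0, and let (h_j) be 2K-periodic positive element sizes with h_j ≥ (2r+1)ε for all j (non-overlapping clusters). Define the 2K-periodic tridiagonal matrix M by M_{j,j−1} = ½ r(r+1) ε/h_j, M_{j,j+1} = ½ r(r+1) ε/h_{j+1}, M_{j,j} = (2r+1) − ½ r(r+1) ε (1/h_j + 1/h_{j+1}), and M_{j,k} = 0 otherwise (indices modulo 2K). Then M is strictly row-diagonally dominant with M_{jj} − Σ_{k≠j} |M_{jk}| > r for every j; hence M is invertible, and the operator norm of M⁻¹ on ℓ^∞ satisfies ‖M⁻¹‖_{ℓ∞} ≤ 1/r if r ≥ 1 and ‖M⁻¹‖_{ℓ∞} ≤ 1 if r = 0. -/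

import Mathlib

lemma st16_shift (f : ℤ → ℝ) (P : ℤ) (hper : ∀ k, f (k + P) = f k) :
    ∀ (m : ℤ) (j : ℤ), f (j + P * m) = f j := by
  intro m
  induction m using Int.induction_on with
  | zero => simp
  | succ n ih =>
      intro j
      have h1 : j + P * ((n : ℤ) + 1) = (j + P * n) + P := by ring
      rw [h1, hper, ih]
  | pred n ih =>
      intro j
      have h1 : j + P * (-(n : ℤ) - 1) + P = j + P * (-(n : ℤ)) := by ring
      have h2 := hper (j + P * (-(n : ℤ) - 1))
      rw [h1] at h2
      rw [← h2, ih]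

lemma st16_congr (f : ℤ → ℝ) (P : ℤ) (hper : ∀ k, f (k + P) = f k)
    {j j' : ℤ} (h : P ∣ j' - j) : f j' = f j := by
  obtain ⟨m, hm⟩ := h
  have : j' = j + P * m := by omega
  rw [this, st16_shift f P hper]

lemma st16_margin (R ε a b : ℝ) (hR : 0 ≤ R) (hε : 0 < ε)
    (ha : (2 * R + 1) * ε ≤ a) (hb : (2 * R + 1) * ε ≤ b) :
    R < ((2 * R + 1) - (R * (R + 1) / 2) * ε * (1 / a + 1 / b)) -
      ((R * (R + 1) / 2) * ε / a + (R * (R + 1) / 2) * ε / b) := by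
  have ha0 : 0 < a := lt_of_lt_of_le (by positivity) ha
  have hb0 : 0 < b := lt_of_lt_of_le (by positivity) hb
  have k1 : (R * (R + 1) / 2) * ε / a ≤ (R * (R + 1) / 2) / (2 * R + 1) := by
    rw [div_le_div_iff₀ ha0 (by positivity)]
    nlinarith [mul_le_mul_of_nonneg_left ha (by positivity : (0:ℝ) ≤ R * (R + 1) / 2)]
  have k2 : (R * (R + 1) / 2) * ε / b ≤ (R * (R + 1) / 2) / (2 * R + 1) := by
    rw [div_le_div_iff₀ hb0 (by positivity)]
    nlinarith [mul_le_mul_of_nonneg_left hb (by positivity : (0:ℝ) ≤ R * (R + 1) / 2)]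
  have k3 : 4 * ((R * (R + 1) / 2) / (2 * R + 1)) < R + 1 := by
    have h : (0:ℝ) < 2 * R + 1 := by positivity
    have e : 4 * ((R * (R + 1) / 2) / (2 * R + 1)) = (2 * (R * (R + 1))) / (2 * R + 1) := by
      ring
    rw [e, div_lt_iff₀ h]
    nlinarith
  have e1 : (R * (R + 1) / 2) * ε * (1 / a + 1 / b) =
      (R * (R + 1) / 2) * ε / a + (R * (R + 1) / 2) * ε / b := by
    field_simp
  rw [e1]
  linarith

lemma st16_key (A A' D v w u : ℝ) (hA : 0 ≤ A) (hA' : 0 ≤ A')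
    (hw : |w| ≤ |v|) (hu : |u| ≤ |v|) :
    (D - A - A') * |v| ≤ |A * w + D * v + A' * u| := by
  have h1 : |A * w| ≤ A * |v| := by
    rw [abs_mul, abs_of_nonneg hA]
    exact mul_le_mul_of_nonneg_left hw hA
  have h2 : |A' * u| ≤ A' * |v| := by
    rw [abs_mul, abs_of_nonneg hA']
    exact mul_le_mul_of_nonneg_left hu hA'
  have h1a := abs_le.mp h1
  have h2a := abs_le.mp h2
  rcases le_or_gt 0 v with hv | hv
  · rw [abs_of_nonneg hv] at *
    have := le_abs_self (A * w + D * v + A' * u)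
    nlinarith
  · rw [abs_of_neg hv] at *
    have := neg_abs_le (A * w + D * v + A' * u)
    nlinarith

theorem statement16 (K : ℤ) (hK : 1 ≤ K) (r : ℕ) (ε : ℝ) (hε : 0 < ε)
    (hsz : ℤ → ℝ) (hpos : ∀ k : ℤ, 0 < hsz k)
    (hper : ∀ k : ℤ, hsz (k + 2 * K) = hsz k)
    (hnov : ∀ j : ℤ, (2 * (r : ℝ) + 1) * ε ≤ hsz j)
    (M : (ℤ → ℝ) → ℤ → ℝ)
    (hM : ∀ (x : ℤ → ℝ) (j : ℤ), M x j =
      ((r : ℝ) * ((r : ℝ) + 1) / 2) * ε / hsz j * x (j - 1) +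
      ((2 * (r : ℝ) + 1) -
        ((r : ℝ) * ((r : ℝ) + 1) / 2) * ε * (1 / hsz j + 1 / hsz (j + 1))) * x j +
      ((r : ℝ) * ((r : ℝ) + 1) / 2) * ε / hsz (j + 1) * x (j + 1)) :
    (∀ j : ℤ,
      (r : ℝ) < ((2 * (r : ℝ) + 1) -
          ((r : ℝ) * ((r : ℝ) + 1) / 2) * ε * (1 / hsz j + 1 / hsz (j + 1))) -
        (|((r : ℝ) * ((r : ℝ) + 1) / 2) * ε / hsz j| +
          |((r : ℝ) * ((r : ℝ) + 1) / 2) * ε / hsz (j + 1)|)) ∧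
    (∀ g : ℤ → ℝ, (∀ k : ℤ, g (k + 2 * K) = g k) →
      ∃! x : ℤ → ℝ, (∀ k : ℤ, x (k + 2 * K) = x k) ∧ ∀ j : ℤ, M x j = g j) ∧
    (1 ≤ r → ∀ x : ℤ → ℝ, (∀ k : ℤ, x (k + 2 * K) = x k) → ∀ j : ℤ,
      |x j| ≤ (1 / (r : ℝ)) *
        (Finset.Icc (-K + 1) K).sup' (Finset.nonempty_Icc.mpr (by omega))
          (fun i => |M x i|)) ∧
    (r = 0 → ∀ x : ℤ → ℝ, (∀ k : ℤ, x (k + 2 * K) = x k) → ∀ j : ℤ,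
      |x j| ≤
        (Finset.Icc (-K + 1) K).sup' (Finset.nonempty_Icc.mpr (by omega))
          (fun i => |M x i|)) := by
  have hRnn : (0:ℝ) ≤ (r:ℝ) := Nat.cast_nonneg r
  have hAnn : ∀ j : ℤ, 0 ≤ ((r : ℝ) * ((r : ℝ) + 1) / 2) * ε / hsz j := fun j =>
    div_nonneg (by positivity) (hpos j).le
  -- Part 1
  have part1 : ∀ j : ℤ,
      (r : ℝ) < ((2 * (r : ℝ) + 1) -
          ((r : ℝ) * ((r : ℝ) + 1) / 2) * ε * (1 / hsz j + 1 / hsz (j + 1))) -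
        (|((r : ℝ) * ((r : ℝ) + 1) / 2) * ε / hsz j| +
          |((r : ℝ) * ((r : ℝ) + 1) / 2) * ε / hsz (j + 1)|) := by
    intro j
    rw [abs_of_nonneg (hAnn j), abs_of_nonneg (hAnn (j + 1))]
    exact st16_margin (r : ℝ) ε (hsz j) (hsz (j + 1)) hRnn hε (hnov j) (hnov (j + 1))
  -- representatives in the fundamental window
  have hrep : ∀ j : ℤ, ∃ j' ∈ Finset.Icc (-K + 1) K, 2 * K ∣ j - j' := by
    intro j
    refine ⟨j - 2 * K * ((j + K - 1) / (2 * K)), ?_, ⟨(j + K - 1) / (2 * K), by ring⟩⟩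
    have h1 : 0 ≤ (j + K - 1) % (2 * K) := Int.emod_nonneg _ (by omega)
    have h2 : (j + K - 1) % (2 * K) < 2 * K := Int.emod_lt_of_pos _ (by omega)
    have h3 : (j + K - 1) % (2 * K) = j + K - 1 - 2 * K * ((j + K - 1) / (2 * K)) := by
      rw [Int.emod_def]
    rw [Finset.mem_Icc]
    omega
  -- the maximizing-index helper
  have bound : ∀ x : ℤ → ℝ, (∀ k : ℤ, x (k + 2 * K) = x k) →
      ∃ i0 ∈ Finset.Icc (-K + 1) K, (∀ j : ℤ, |x j| ≤ |x i0|) ∧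
        ((r : ℝ) * |x i0| ≤ |M x i0|) ∧ (M x i0 = 0 → x i0 = 0) := by
    intro x hxper
    obtain ⟨i0, hi0mem, hmax⟩ := Finset.exists_max_image (Finset.Icc (-K + 1) K)
      (fun i => |x i|) (Finset.nonempty_Icc.mpr (by omega))
    have hglob : ∀ j : ℤ, |x j| ≤ |x i0| := by
      intro j
      obtain ⟨j', hj'mem, hdvd⟩ := hrep j
      have : x j = x j' := st16_congr x (2 * K) hxper hdvd
      rw [this]
      exact hmax j' hj'mem
    have hkey := st16_key (((r : ℝ) * ((r : ℝ) + 1) / 2) * ε / hsz i0)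
      (((r : ℝ) * ((r : ℝ) + 1) / 2) * ε / hsz (i0 + 1))
      ((2 * (r : ℝ) + 1) -
        ((r : ℝ) * ((r : ℝ) + 1) / 2) * ε * (1 / hsz i0 + 1 / hsz (i0 + 1)))
      (x i0) (x (i0 - 1)) (x (i0 + 1)) (hAnn i0) (hAnn (i0 + 1))
      (hglob (i0 - 1)) (hglob (i0 + 1))
    rw [← hM x i0] at hkey
    have hmarg := st16_margin (r : ℝ) ε (hsz i0) (hsz (i0 + 1)) hRnn hε
      (hnov i0) (hnov (i0 + 1))
    refine ⟨i0, hi0mem, hglob, ?_, ?_⟩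
    · nlinarith [abs_nonneg (x i0)]
    · intro h0
      rw [h0, abs_zero] at hkey
      have : |x i0| ≤ 0 := by nlinarith [abs_nonneg (x i0)]
      exact abs_eq_zero.mp (le_antisymm this (abs_nonneg _))
  refine ⟨part1, ?_, ?_, ?_⟩
  · -- Part 2 : existence and uniqueness
    -- set up the finite model on ZMod N
    intro g hgper
    set N : ℕ := (2 * K).toNat with hNdef
    have hN : (N : ℤ) = 2 * K := Int.toNat_of_nonneg (by omega)
    haveI : NeZero N := ⟨by omega⟩
    have cast_dvd : ∀ a b : ℤ, ((a : ZMod N) = (b : ZMod N)) ↔ 2 * K ∣ b - a := by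
      intro a b
      rw [ZMod.intCast_eq_intCast_iff_dvd_sub, hN]
    have valcastN : ∀ i : ZMod N, ((i.val : ZMod N)) = i := fun i =>
      ZMod.natCast_rightInverse i
    have valcast : ∀ i : ZMod N, (((i.val : ℤ) : ZMod N)) = i := by
      intro i
      exact_mod_cast valcastN i
    have hcong : ∀ (f : ℤ → ℝ), (∀ k, f (k + 2 * K) = f k) →
        ∀ (j j' : ℤ), (j : ZMod N) = (j' : ZMod N) → f j = f j' := by
      intro f hf j j' h
      exact (st16_congr f (2 * K) hf ((cast_dvd j j').mp h)).symm
    set Hf : ZMod N → ℝ := fun i => hsz (i.val : ℤ) with hHf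
    have Hcast : ∀ j : ℤ, hsz j = Hf ((j : ZMod N)) := by
      intro j
      exact hcong hsz hper j (((j : ZMod N)).val : ℤ) (valcast _).symm
    have Hsucc : ∀ i : ZMod N, Hf (i + 1) = hsz ((i.val : ℤ) + 1) := by
      intro i
      refine (hcong hsz hper ((i.val : ℤ) + 1) (((i + 1 : ZMod N)).val : ℤ) ?_).symm
      push_cast
      rw [valcastN, valcastN]
    set Af : ZMod N → ℝ := fun i => ((r : ℝ) * ((r : ℝ) + 1) / 2) * ε / Hf i with hAf
    set Df : ZMod N → ℝ := fun i => (2 * (r : ℝ) + 1) -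
      ((r : ℝ) * ((r : ℝ) + 1) / 2) * ε * (1 / Hf i + 1 / Hf (i + 1)) with hDf
    set Tf : (ZMod N → ℝ) → (ZMod N → ℝ) :=
      fun y i => Af i * y (i - 1) + Df i * y i + Af (i + 1) * y (i + 1) with hTf
    have AfnnZ : ∀ i : ZMod N, 0 ≤ Af i := fun i =>
      div_nonneg (by positivity) (hpos _).le
    have marginZ : ∀ i : ZMod N, (r : ℝ) < Df i - Af i - Af (i + 1) := by
      intro i
      have hm := st16_margin (r : ℝ) ε (hsz (i.val : ℤ)) (hsz ((i.val : ℤ) + 1)) hRnn hε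
        (hnov _) (hnov _)
      have e2 : Af (i + 1) = ((r : ℝ) * ((r : ℝ) + 1) / 2) * ε / hsz ((i.val : ℤ) + 1) := by
        simp only [hAf]
        rw [Hsucc]
      have e3 : Df i = (2 * (r : ℝ) + 1) -
          ((r : ℝ) * ((r : ℝ) + 1) / 2) * ε *
            (1 / hsz (i.val : ℤ) + 1 / hsz ((i.val : ℤ) + 1)) := by
        simp only [hDf]
        rw [Hsucc]
      have e4 : Af i = ((r : ℝ) * ((r : ℝ) + 1) / 2) * ε / hsz (i.val : ℤ) := rfl
      rw [e2, e3, e4]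
      linarith
    -- the linear map
    have Tadd : ∀ y z : ZMod N → ℝ, Tf (y + z) = Tf y + Tf z := by
      intro y z
      funext i
      simp only [hTf, Pi.add_apply]
      ring
    have Tsmul : ∀ (c : ℝ) (y : ZMod N → ℝ), Tf (c • y) = c • Tf y := by
      intro c y
      funext i
      simp only [hTf, Pi.smul_apply, smul_eq_mul]
      ring
    set T : (ZMod N → ℝ) →ₗ[ℝ] (ZMod N → ℝ) :=
      { toFun := Tf, map_add' := Tadd, map_smul' := Tsmul } with hT
    have happ : ∀ (y : ZMod N → ℝ) (i : ZMod N), T y i = Tf y i := fun y i => rfl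
    have Tinj : Function.Injective T := by
      rw [← LinearMap.ker_eq_bot, LinearMap.ker_eq_bot']
      intro y hy
      obtain ⟨i0, _, hmax⟩ := Finset.exists_max_image Finset.univ
        (fun i : ZMod N => |y i|) ⟨0, Finset.mem_univ 0⟩
      have h0 : Tf y i0 = 0 := by rw [← happ, hy]; rfl
      have hkey := st16_key (Af i0) (Af (i0 + 1)) (Df i0) (y i0) (y (i0 - 1)) (y (i0 + 1))
        (AfnnZ i0) (AfnnZ (i0 + 1)) (hmax _ (Finset.mem_univ _)) (hmax _ (Finset.mem_univ _))
      have hTfy : Tf y i0 = Af i0 * y (i0 - 1) + Df i0 * y i0 + Af (i0 + 1) * y (i0 + 1) := rfl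
      rw [← hTfy, h0, abs_zero] at hkey
      have hmg := marginZ i0
      have hzero : |y i0| = 0 := by
        nlinarith [abs_nonneg (y i0)]
      funext i
      have := hmax i (Finset.mem_univ i)
      have : |y i| ≤ 0 := by simpa [hzero] using this
      simpa using abs_eq_zero.mp (le_antisymm this (abs_nonneg _))
    have Tsurj : Function.Surjective T := LinearMap.injective_iff_surjective.mp Tinj
    obtain ⟨y, hy⟩ := Tsurj (fun i : ZMod N => g (i.val : ℤ))
    have h2K0 : ((2 * K : ℤ) : ZMod N) = 0 := by
      rw [← hN]
      push_cast
      exact ZMod.natCast_self N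
    refine ⟨fun j => y ((j : ZMod N)), ⟨?_, ?_⟩, ?_⟩
    · intro k
      simp only
      congr 1
      rw [Int.cast_add, h2K0, add_zero]
    · intro j
      rw [hM]
      beta_reduce
      have e1 : ((j - 1 : ℤ) : ZMod N) = (j : ZMod N) - 1 := by push_cast; ring
      have e2 : ((j + 1 : ℤ) : ZMod N) = (j : ZMod N) + 1 := by push_cast; ring
      rw [e1, e2, Hcast j]
      have e3 : hsz (j + 1) = Hf ((j : ZMod N) + 1) := by rw [Hcast (j + 1), e2]
      rw [e3]
      have e4 : Tf y ((j : ZMod N)) = g ((((j : ZMod N)).val : ℤ)) := by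
        rw [← happ, hy]
      have e5 : g ((((j : ZMod N)).val : ℤ)) = g j :=
        (hcong g hgper j _ (valcast _).symm).symm
      rw [← e5, ← e4]
    · -- uniqueness
      intro x' hx'
      obtain ⟨hx'per, hx'sol⟩ := hx'
      set x : ℤ → ℝ := fun j => y ((j : ZMod N)) with hxdef
      have hxper : ∀ k : ℤ, x (k + 2 * K) = x k := by
        intro k
        simp only [hxdef]
        congr 1
        rw [Int.cast_add, h2K0, add_zero]
      have hxsol : ∀ j : ℤ, M x j = g j := by
        intro j
        rw [hM]
        simp only [hxdef]
        beta_reduce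
        have e1 : ((j - 1 : ℤ) : ZMod N) = (j : ZMod N) - 1 := by push_cast; ring
        have e2 : ((j + 1 : ℤ) : ZMod N) = (j : ZMod N) + 1 := by push_cast; ring
        rw [e1, e2, Hcast j]
        have e3 : hsz (j + 1) = Hf ((j : ZMod N) + 1) := by rw [Hcast (j + 1), e2]
        rw [e3]
        have e4 : Tf y ((j : ZMod N)) = g ((((j : ZMod N)).val : ℤ)) := by
          rw [← happ, hy]
        have e5 : g ((((j : ZMod N)).val : ℤ)) = g j :=
          (hcong g hgper j _ (valcast _).symm).symm
        rw [← e5, ← e4]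
      -- difference is zero
      have hzper : ∀ k : ℤ, (fun t => x' t - x t) (k + 2 * K) = (fun t => x' t - x t) k := by
        intro k
        beta_reduce
        rw [hx'per, hxper]
      have hz : ∀ j : ℤ, M (fun t => x' t - x t) j = 0 := by
        intro j
        rw [hM]
        have h1 := hx'sol j
        rw [hM] at h1
        have h2 := hxsol j
        rw [hM] at h2
        beta_reduce
        linear_combination h1 - h2
      obtain ⟨i0, _, hglob, _, hzero⟩ := bound (fun t => x' t - x t) hzper
      have hzi0 : x' i0 - x i0 = 0 := hzero (hz i0)
      funext j
      have hj := hglob j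
      rw [hzi0, abs_zero] at hj
      have h5 : |x' j - x j| = 0 := le_antisymm hj (abs_nonneg _)
      have h6 := abs_eq_zero.mp h5
      have : x' j = x j := by linarith
      exact this
  · -- Part 3
    intro hr x hxper j
    obtain ⟨i0, hi0mem, hglob, hri0, _⟩ := bound x hxper
    have hS : |M x i0| ≤ (Finset.Icc (-K + 1) K).sup'
        (Finset.nonempty_Icc.mpr (by omega)) (fun i => |M x i|) :=
      Finset.le_sup' (fun i => |M x i|) hi0mem
    have hr0 : (0:ℝ) < (r : ℝ) := by exact_mod_cast hr
    have h1 : (r : ℝ) * |x j| ≤ (Finset.Icc (-K + 1) K).sup'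
        (Finset.nonempty_Icc.mpr (by omega)) (fun i => |M x i|) := by
      calc (r : ℝ) * |x j| ≤ (r : ℝ) * |x i0| :=
            mul_le_mul_of_nonneg_left (hglob j) hRnn
        _ ≤ |M x i0| := hri0
        _ ≤ _ := hS
    calc |x j| = (1 / (r : ℝ)) * ((r : ℝ) * |x j|) := by field_simp
      _ ≤ _ := mul_le_mul_of_nonneg_left h1 (by positivity)
  · -- Part 4
    intro hr0 x hxper j
    have hid : ∀ t : ℤ, M x t = x t := by
      intro t
      rw [hM]
      subst hr0
      push_cast
      ring
    obtain ⟨j', hj'mem, hdvd⟩ := hrep j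
    have hxx : x j = x j' := st16_congr x (2 * K) hxper hdvd
    rw [hxx, ← hid j']
    exact Finset.le_sup' (fun i => |M x i|) hj'mem
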